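/- Let m1,...,mr ≥ 1 be integers and N = m1 + ... + mr. Then the polynomial identity holds: x1^{m1-1} ∘ (x1^{m2-1} x2^{m3-1} ⋯ x_{r-1}^{m_r-1}) = Σ_{n1+...+nr=N, ni≥1} e(m1,...,mr; n1,...,nr) x1^{n1-1} ⋯ xr^{nr-1}, where e(m1,...,mr; n1,...,nr) = δ((m1,...,mr),(n1,...,nr)) + Σ_{i=1}^{r-1} δ((m2,...,mi,m_{i+2},...,mr),(n1,...,n_{i-1},n_{i+2},...,nr)) * b_{ni,n_{i+1}}^{m1}. -/

import Mathlib

open MvPolynomial Finset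

attribute [local instance] Classical.propDecidable

noncomputable section

/-- `b_{n,n'}^m = (-1)^n * C(m-1, n-1) + (-1)^(n'-m) * C(m-1, n'-1)`. -/
def bb (n n' m : ℕ) : ℚ :=
  (-1 : ℚ) ^ n * ((m - 1).choose (n - 1) : ℚ) +
    (-1 : ℚ) ^ ((n' : ℤ) - (m : ℤ)) * ((m - 1).choose (n' - 1) : ℚ)

/-- The Kronecker delta `δ((m2,...,mi,m_{i+2},...,mr),(n1,...,n_{i-1},n_{i+2},...,nr))`,
for 1-indexed tuples `m, n : ℕ → ℕ` of length `r`. -/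
def deltaCond (r i : ℕ) (m n : ℕ → ℕ) : Prop :=
  (∀ j ∈ Finset.Icc 2 i, m j = n (j - 1)) ∧ (∀ j ∈ Finset.Icc (i + 2) r, m j = n j)

/-- The entry `e(m1,...,mr; n1,...,nr)` of the matrix `E_{N,r}`:
`δ(m,n) + Σ_{i=1}^{r-1} δ((m2,...,mi,m_{i+2},...,mr),(n1,...,n_{i-1},n_{i+2},...,nr)) b_{ni,n_{i+1}}^{m1}`. -/
def eE (r : ℕ) (m n : ℕ → ℕ) : ℚ :=
  (if ∀ j ∈ Finset.Icc 1 r, m j = n j then (1 : ℚ) else 0) +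
    ∑ i ∈ Finset.Icc 1 (r - 1), if deltaCond r i m n then bb (n i) (n (i + 1)) (m 1) else 0

/-- The linearised Ihara action `x1^{m1-1} ∘ (x1^{m2-1} ⋯ x_{r-1}^{m_r-1})`, given by its explicit
formula, written in the 1-indexed variables `X 1, ..., X r`. -/
def iharaLHS (r : ℕ) (m : ℕ → ℕ) : MvPolynomial ℕ ℚ :=
  (∏ j ∈ Finset.Icc 1 r, (X j) ^ (m j - 1)) +
    ∑ i ∈ Finset.Icc 1 (r - 1),
      (X (i + 1) - X i) ^ (m 1 - 1) *
        ((∏ j ∈ Finset.Icc 1 i, (X j) ^ (m (j + 1) - 1)) *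
            (∏ j ∈ Finset.Icc (i + 2) r, (X j) ^ (m j - 1)) -
          (∏ j ∈ Finset.Icc 1 (i - 1), (X j) ^ (m (j + 1) - 1)) *
            (∏ j ∈ Finset.Icc (i + 1) r, (X j) ^ (m j - 1)))

/-! ### Auxiliary lemmas -/

lemma prodXpow (s : Finset ℕ) (e : ℕ → ℕ) :
    (∏ j ∈ s, (X j : MvPolynomial ℕ ℚ) ^ e j) =
      monomial (∑ j ∈ s, Finsupp.single j (e j)) 1 := by
  induction s using Finset.induction with
  | empty => simp [monomial_zero']
  | insert _ _ h ih =>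
      rw [Finset.prod_insert h, Finset.sum_insert h, ih, X_pow_eq_monomial, monomial_mul, one_mul]

lemma sumsingle_apply (s : Finset ℕ) (e : ℕ → ℕ) (k : ℕ) :
    (∑ j ∈ s, Finsupp.single j (e j)) k = if k ∈ s then e k else 0 := by
  rw [Finset.sum_apply']
  simp [Finsupp.single_apply, Finset.sum_ite_eq']

lemma neg_one_pow_congr' {a b : ℕ} (h : a % 2 = b % 2) : ((-1:ℚ))^a = (-1)^b := by
  rcases Nat.even_or_odd a with ha | ha
  · have hb : Even b := by rw [Nat.even_iff] at ha ⊢; omega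
    rw [ha.neg_one_pow, hb.neg_one_pow]
  · have hb : Odd b := by rw [Nat.odd_iff] at ha ⊢; omega
    rw [ha.neg_one_pow, hb.neg_one_pow]

lemma neg_one_zpow_sub (a b : ℕ) : ((-1:ℚ))^((a:ℤ) - (b:ℤ)) = (-1:ℚ)^(a+b) := by
  rw [zpow_sub₀ (by norm_num : (-1:ℚ) ≠ 0), zpow_natCast, zpow_natCast, pow_add]
  rcases Nat.even_or_odd b with hb | hb
  · rw [hb.neg_one_pow]; norm_num
  · rw [hb.neg_one_pow]; field_simp

lemma coeff_helper (u v : ℕ) (a b : ℕ) (t d : ℕ →₀ ℕ) (c : ℚ) :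
    MvPolynomial.coeff d ((C c : MvPolynomial ℕ ℚ) * (X u ^ a * X v ^ b * monomial t 1)) =
      if Finsupp.single u a + (Finsupp.single v b + t) = d then c else 0 := by
  rw [X_pow_eq_monomial, X_pow_eq_monomial, monomial_mul, monomial_mul, coeff_C_mul,
    coeff_monomial, add_assoc]
  split_ifs <;> simp

lemma sum_shift (a b : ℕ) (f : ℕ → ℕ) :
    ∑ j ∈ Finset.Icc (a+1) (b+1), f j = ∑ j ∈ Finset.Icc a b, f (j+1) := by
  rw [show Finset.Icc (a+1) (b+1) = (Finset.Icc a b).image (· + 1) by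
    ext x
    simp only [Finset.mem_image, Finset.mem_Icc]
    constructor
    · intro h; exact ⟨x - 1, by omega, by omega⟩
    · rintro ⟨y, hy, rfl⟩; omega]
  rw [Finset.sum_image (by intro x _ y _ h; simpa using h)]

lemma sum_split (r i : ℕ) (hi1 : 1 ≤ i) (hir : i + 1 ≤ r) (f : ℕ → ℕ) :
    ∑ j ∈ Finset.Icc 1 r, f j =
      (∑ j ∈ Finset.Icc 1 (i-1), f j) + f i + f (i+1) + ∑ j ∈ Finset.Icc (i+2) r, f j := by
  have d1 : Disjoint (Finset.Icc 1 (i-1)) ({i} : Finset ℕ) := by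
    simp only [Finset.disjoint_left, Finset.mem_Icc, Finset.mem_singleton]; omega
  have d2 : Disjoint (Finset.Icc 1 (i-1) ∪ {i}) ({i+1} : Finset ℕ) := by
    simp only [Finset.disjoint_left, Finset.mem_union, Finset.mem_Icc, Finset.mem_singleton]; omega
  have d3 : Disjoint (Finset.Icc 1 (i-1) ∪ {i} ∪ {i+1}) (Finset.Icc (i+2) r) := by
    simp only [Finset.disjoint_left, Finset.mem_union, Finset.mem_Icc, Finset.mem_singleton]; omega
  have h1 : Finset.Icc 1 r = Finset.Icc 1 (i-1) ∪ {i} ∪ {i+1} ∪ Finset.Icc (i+2) r := by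
    ext x; simp only [Finset.mem_union, Finset.mem_Icc, Finset.mem_singleton]; omega
  rw [h1, Finset.sum_union d3, Finset.sum_union d2, Finset.sum_union d1,
    Finset.sum_singleton, Finset.sum_singleton]

lemma sum_split_m (r i : ℕ) (hi1 : 1 ≤ i) (hir : i + 1 ≤ r) (f : ℕ → ℕ) :
    ∑ j ∈ Finset.Icc 1 r, f j =
      f 1 + (∑ j ∈ Finset.Icc 2 i, f j) + f (i+1) + ∑ j ∈ Finset.Icc (i+2) r, f j := by
  have d1 : Disjoint ({1} : Finset ℕ) (Finset.Icc 2 i) := by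
    simp only [Finset.disjoint_left, Finset.mem_Icc, Finset.mem_singleton]; omega
  have d2 : Disjoint (({1} : Finset ℕ) ∪ Finset.Icc 2 i) ({i+1} : Finset ℕ) := by
    simp only [Finset.disjoint_left, Finset.mem_union, Finset.mem_Icc, Finset.mem_singleton]; omega
  have d3 : Disjoint (({1} : Finset ℕ) ∪ Finset.Icc 2 i ∪ {i+1}) (Finset.Icc (i+2) r) := by
    simp only [Finset.disjoint_left, Finset.mem_union, Finset.mem_Icc, Finset.mem_singleton]; omega
  have h1 : Finset.Icc 1 r = {1} ∪ Finset.Icc 2 i ∪ {i+1} ∪ Finset.Icc (i+2) r := by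
    ext x; simp only [Finset.mem_union, Finset.mem_Icc, Finset.mem_singleton]; omega
  rw [h1, Finset.sum_union d3, Finset.sum_union d2, Finset.sum_union d1,
    Finset.sum_singleton, Finset.sum_singleton]

lemma key_sum (r i : ℕ) (m n : ℕ → ℕ) (hi1 : 1 ≤ i) (hir : i + 1 ≤ r)
    (hsum : ∑ j ∈ Finset.Icc 1 r, n j = ∑ j ∈ Finset.Icc 1 r, m j)
    (hδ : deltaCond r i m n) : n i + n (i + 1) = m 1 + m (i + 1) := by
  obtain ⟨hδ1, hδ2⟩ := hδ
  rw [sum_split r i hi1 hir n, sum_split_m r i hi1 hir m] at hsum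
  have e3 : ∑ j ∈ Finset.Icc 2 i, m j = ∑ j ∈ Finset.Icc 1 (i-1), n j := by
    have h2 : Finset.Icc 2 i = Finset.Icc (1+1) ((i-1)+1) := by congr 1; omega
    rw [h2, sum_shift]
    apply Finset.sum_congr rfl
    intro j hj; rw [Finset.mem_Icc] at hj
    have h := hδ1 (j+1) (Finset.mem_Icc.mpr ⟨by omega, by omega⟩)
    rw [Nat.add_sub_cancel] at h
    exact h
  have e4 : ∑ j ∈ Finset.Icc (i+2) r, m j = ∑ j ∈ Finset.Icc (i+2) r, n j :=
    Finset.sum_congr rfl fun j hj => hδ2 j hj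
  omega

/-! ### Coefficient of the `A`-part of a term -/

lemma coeff_A (r i : ℕ) (m n : ℕ → ℕ) (hi1 : 1 ≤ i) (hir : i + 1 ≤ r)
    (hm : ∀ j ∈ Finset.Icc 1 r, 1 ≤ m j) (hn : ∀ j ∈ Finset.Icc 1 r, 1 ≤ n j)
    (hsum : ∑ j ∈ Finset.Icc 1 r, n j = ∑ j ∈ Finset.Icc 1 r, m j) :
    MvPolynomial.coeff (∑ j ∈ Finset.Icc 1 r, Finsupp.single j (n j - 1))
      ((X (i + 1) - X i) ^ (m 1 - 1) *
        ((∏ j ∈ Finset.Icc 1 i, (X j : MvPolynomial ℕ ℚ) ^ (m (j + 1) - 1)) *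
          (∏ j ∈ Finset.Icc (i + 2) r, (X j) ^ (m j - 1)))) =
      if deltaCond r i m n then
        (-1:ℚ) ^ (n (i+1) + m 1) * ((m 1 - 1).choose (n (i+1) - 1) : ℚ) else 0 := by
  have hm1 : 1 ≤ m 1 := hm 1 (Finset.mem_Icc.mpr ⟨le_refl 1, by omega⟩)
  have hmi1 : 1 ≤ m (i+1) := hm (i+1) (Finset.mem_Icc.mpr ⟨by omega, hir⟩)
  have hni : 1 ≤ n i := hn i (Finset.mem_Icc.mpr ⟨hi1, by omega⟩)
  have hni1 : 1 ≤ n (i+1) := hn (i+1) (Finset.mem_Icc.mpr ⟨by omega, hir⟩)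
  rw [prodXpow, prodXpow, monomial_mul, mul_one, sub_pow, Finset.sum_mul, coeff_sum]
  have hiff : ∀ k : ℕ,
      (Finsupp.single (i+1) k + (Finsupp.single i ((m 1 - 1) - k) +
        ((∑ j ∈ Finset.Icc 1 i, Finsupp.single j (m (j+1) - 1)) +
          ∑ j ∈ Finset.Icc (i+2) r, Finsupp.single j (m j - 1))) =
        ∑ j ∈ Finset.Icc 1 r, Finsupp.single j (n j - 1)) ↔
      (deltaCond r i m n ∧ k = n (i+1) - 1 ∧
        ((m 1 - 1) - k) + (m (i+1) - 1) = n i - 1) := by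
    intro k
    rw [DFunLike.ext_iff]
    simp only [Finsupp.add_apply, Finsupp.single_apply, sumsingle_apply, Finset.mem_Icc]
    constructor
    · intro h
      refine ⟨⟨?_, ?_⟩, ?_, ?_⟩
      · intro j hj
        rw [Finset.mem_Icc] at hj
        have h' := h (j-1)
        have hmj := hm j (Finset.mem_Icc.mpr ⟨by omega, by omega⟩)
        have hnj := hn (j-1) (Finset.mem_Icc.mpr ⟨by omega, by omega⟩)
        have e : j - 1 + 1 = j := by omega
        rw [e] at h'
        split_ifs at h' <;> omega
      · intro j hj
        rw [Finset.mem_Icc] at hj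
        have h' := h j
        have hmj := hm j (Finset.mem_Icc.mpr ⟨by omega, by omega⟩)
        have hnj := hn j (Finset.mem_Icc.mpr ⟨by omega, by omega⟩)
        split_ifs at h' <;> omega
      · have h' := h (i+1)
        split_ifs at h' <;> omega
      · have h' := h i
        split_ifs at h' <;> omega
    · rintro ⟨⟨hδ1, hδ2⟩, hk, hki⟩ j
      by_cases hji : j = i
      · subst hji; split_ifs <;> omega
      by_cases hji1 : j = i + 1
      · subst hji1; split_ifs <;> omega
      by_cases hlo : 1 ≤ j ∧ j ≤ i - 1
      · have h := hδ1 (j+1) (Finset.mem_Icc.mpr ⟨by omega, by omega⟩)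
        rw [Nat.add_sub_cancel] at h
        split_ifs <;> omega
      by_cases hhi : i + 2 ≤ j ∧ j ≤ r
      · have h := hδ2 j (Finset.mem_Icc.mpr hhi)
        split_ifs <;> omega
      · split_ifs <;> omega
  have hstep : ∀ k ∈ Finset.range (m 1 - 1 + 1),
      MvPolynomial.coeff (∑ j ∈ Finset.Icc 1 r, Finsupp.single j (n j - 1))
        ((-1 : MvPolynomial ℕ ℚ) ^ (k + (m 1 - 1)) * X (i+1) ^ k * X i ^ ((m 1 - 1) - k) *
          ((m 1 - 1).choose k : MvPolynomial ℕ ℚ) *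
          monomial ((∑ j ∈ Finset.Icc 1 i, Finsupp.single j (m (j+1) - 1)) +
            ∑ j ∈ Finset.Icc (i+2) r, Finsupp.single j (m j - 1)) 1) =
      (if deltaCond r i m n ∧ k = n (i+1) - 1 ∧
          ((m 1 - 1) - k) + (m (i+1) - 1) = n i - 1 then
        ((-1:ℚ) ^ (k + (m 1 - 1)) * ((m 1 - 1).choose k : ℚ)) else 0) := by
    intro k _
    have hterm : (-1 : MvPolynomial ℕ ℚ) ^ (k + (m 1 - 1)) * X (i+1) ^ k *
        X i ^ ((m 1 - 1) - k) * ((m 1 - 1).choose k : MvPolynomial ℕ ℚ) *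
        monomial ((∑ j ∈ Finset.Icc 1 i, Finsupp.single j (m (j+1) - 1)) +
          ∑ j ∈ Finset.Icc (i+2) r, Finsupp.single j (m j - 1)) 1 =
        C ((-1:ℚ) ^ (k + (m 1 - 1)) * ((m 1 - 1).choose k : ℚ)) *
        (X (i+1) ^ k * X i ^ ((m 1 - 1) - k) *
          monomial ((∑ j ∈ Finset.Icc 1 i, Finsupp.single j (m (j+1) - 1)) +
            ∑ j ∈ Finset.Icc (i+2) r, Finsupp.single j (m j - 1)) 1) := by
      simp only [map_mul, map_pow, map_neg, map_one, map_natCast]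
      ring
    rw [hterm, coeff_helper]
    exact if_congr (hiff k) rfl rfl
  rw [Finset.sum_congr rfl hstep]
  by_cases hδ : deltaCond r i m n
  · have hkey := key_sum r i m n hi1 hir hsum hδ
    by_cases hle : n (i+1) ≤ m 1
    · rw [Finset.sum_eq_single (n (i+1) - 1)]
      · rw [if_pos ⟨hδ, rfl, by omega⟩, if_pos hδ]
        congr 1
        exact neg_one_pow_congr' (by omega)
      · intro k _ hne
        rw [if_neg]
        rintro ⟨-, hk2, -⟩
        exact hne hk2
      · intro hnotmem
        exact absurd (Finset.mem_range.mpr (by omega)) hnotmem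
    · rw [if_pos hδ, Finset.sum_eq_zero, Nat.choose_eq_zero_of_lt (by omega)]
      · simp
      · intro k hk
        rw [Finset.mem_range] at hk
        rw [if_neg]
        rintro ⟨-, rfl, -⟩
        omega
  · rw [if_neg hδ]
    apply Finset.sum_eq_zero
    intro k _
    rw [if_neg]
    rintro ⟨h1, -, -⟩
    exact hδ h1

/-! ### Coefficient of the `B`-part of a term -/

lemma coeff_B (r i : ℕ) (m n : ℕ → ℕ) (hi1 : 1 ≤ i) (hir : i + 1 ≤ r)
    (hm : ∀ j ∈ Finset.Icc 1 r, 1 ≤ m j) (hn : ∀ j ∈ Finset.Icc 1 r, 1 ≤ n j)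
    (hsum : ∑ j ∈ Finset.Icc 1 r, n j = ∑ j ∈ Finset.Icc 1 r, m j) :
    MvPolynomial.coeff (∑ j ∈ Finset.Icc 1 r, Finsupp.single j (n j - 1))
      ((X (i + 1) - X i) ^ (m 1 - 1) *
        ((∏ j ∈ Finset.Icc 1 (i-1), (X j : MvPolynomial ℕ ℚ) ^ (m (j + 1) - 1)) *
          (∏ j ∈ Finset.Icc (i + 1) r, (X j) ^ (m j - 1)))) =
      if deltaCond r i m n then
        (-1:ℚ) ^ (n i + 1) * ((m 1 - 1).choose (n i - 1) : ℚ) else 0 := by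
  have hm1 : 1 ≤ m 1 := hm 1 (Finset.mem_Icc.mpr ⟨le_refl 1, by omega⟩)
  have hmi1 : 1 ≤ m (i+1) := hm (i+1) (Finset.mem_Icc.mpr ⟨by omega, hir⟩)
  have hni : 1 ≤ n i := hn i (Finset.mem_Icc.mpr ⟨hi1, by omega⟩)
  have hni1 : 1 ≤ n (i+1) := hn (i+1) (Finset.mem_Icc.mpr ⟨by omega, hir⟩)
  rw [prodXpow, prodXpow, monomial_mul, mul_one, sub_pow, Finset.sum_mul, coeff_sum]
  have hiff : ∀ k : ℕ,
      (Finsupp.single (i+1) k + (Finsupp.single i ((m 1 - 1) - k) +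
        ((∑ j ∈ Finset.Icc 1 (i-1), Finsupp.single j (m (j+1) - 1)) +
          ∑ j ∈ Finset.Icc (i+1) r, Finsupp.single j (m j - 1))) =
        ∑ j ∈ Finset.Icc 1 r, Finsupp.single j (n j - 1)) ↔
      (deltaCond r i m n ∧ (m 1 - 1) - k = n i - 1 ∧
        k + (m (i+1) - 1) = n (i+1) - 1) := by
    intro k
    rw [DFunLike.ext_iff]
    simp only [Finsupp.add_apply, Finsupp.single_apply, sumsingle_apply, Finset.mem_Icc]
    constructor
    · intro h
      refine ⟨⟨?_, ?_⟩, ?_, ?_⟩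
      · intro j hj
        rw [Finset.mem_Icc] at hj
        have h' := h (j-1)
        have hmj := hm j (Finset.mem_Icc.mpr ⟨by omega, by omega⟩)
        have hnj := hn (j-1) (Finset.mem_Icc.mpr ⟨by omega, by omega⟩)
        have e : j - 1 + 1 = j := by omega
        rw [e] at h'
        split_ifs at h' <;> omega
      · intro j hj
        rw [Finset.mem_Icc] at hj
        have h' := h j
        have hmj := hm j (Finset.mem_Icc.mpr ⟨by omega, by omega⟩)
        have hnj := hn j (Finset.mem_Icc.mpr ⟨by omega, by omega⟩)
        split_ifs at h' <;> omega
      · have h' := h i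
        split_ifs at h' <;> omega
      · have h' := h (i+1)
        split_ifs at h' <;> omega
    · rintro ⟨⟨hδ1, hδ2⟩, hk1, hk2⟩ j
      by_cases hji : j = i
      · subst hji; split_ifs <;> omega
      by_cases hji1 : j = i + 1
      · subst hji1; split_ifs <;> omega
      by_cases hlo : 1 ≤ j ∧ j ≤ i - 1
      · have h := hδ1 (j+1) (Finset.mem_Icc.mpr ⟨by omega, by omega⟩)
        rw [Nat.add_sub_cancel] at h
        split_ifs <;> omega
      by_cases hhi : i + 2 ≤ j ∧ j ≤ r
      · have h := hδ2 j (Finset.mem_Icc.mpr hhi)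
        split_ifs <;> omega
      · split_ifs <;> omega
  have hstep : ∀ k ∈ Finset.range (m 1 - 1 + 1),
      MvPolynomial.coeff (∑ j ∈ Finset.Icc 1 r, Finsupp.single j (n j - 1))
        ((-1 : MvPolynomial ℕ ℚ) ^ (k + (m 1 - 1)) * X (i+1) ^ k * X i ^ ((m 1 - 1) - k) *
          ((m 1 - 1).choose k : MvPolynomial ℕ ℚ) *
          monomial ((∑ j ∈ Finset.Icc 1 (i-1), Finsupp.single j (m (j+1) - 1)) +
            ∑ j ∈ Finset.Icc (i+1) r, Finsupp.single j (m j - 1)) 1) =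
      (if deltaCond r i m n ∧ (m 1 - 1) - k = n i - 1 ∧
          k + (m (i+1) - 1) = n (i+1) - 1 then
        ((-1:ℚ) ^ (k + (m 1 - 1)) * ((m 1 - 1).choose k : ℚ)) else 0) := by
    intro k _
    have hterm : (-1 : MvPolynomial ℕ ℚ) ^ (k + (m 1 - 1)) * X (i+1) ^ k *
        X i ^ ((m 1 - 1) - k) * ((m 1 - 1).choose k : MvPolynomial ℕ ℚ) *
        monomial ((∑ j ∈ Finset.Icc 1 (i-1), Finsupp.single j (m (j+1) - 1)) +
          ∑ j ∈ Finset.Icc (i+1) r, Finsupp.single j (m j - 1)) 1 =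
        C ((-1:ℚ) ^ (k + (m 1 - 1)) * ((m 1 - 1).choose k : ℚ)) *
        (X (i+1) ^ k * X i ^ ((m 1 - 1) - k) *
          monomial ((∑ j ∈ Finset.Icc 1 (i-1), Finsupp.single j (m (j+1) - 1)) +
            ∑ j ∈ Finset.Icc (i+1) r, Finsupp.single j (m j - 1)) 1) := by
      simp only [map_mul, map_pow, map_neg, map_one, map_natCast]
      ring
    rw [hterm, coeff_helper]
    exact if_congr (hiff k) rfl rfl
  rw [Finset.sum_congr rfl hstep]
  by_cases hδ : deltaCond r i m n
  · have hkey := key_sum r i m n hi1 hir hsum hδ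
    by_cases hle : n i ≤ m 1
    · rw [Finset.sum_eq_single (m 1 - n i)]
      · rw [if_pos ⟨hδ, by omega, by omega⟩, if_pos hδ]
        have hc : (m 1 - 1).choose (m 1 - n i) = (m 1 - 1).choose (n i - 1) := by
          rw [show m 1 - n i = (m 1 - 1) - (n i - 1) by omega,
            Nat.choose_symm (by omega : n i - 1 ≤ m 1 - 1)]
        rw [hc]
        congr 1
        exact neg_one_pow_congr' (by omega)
      · intro k hk hne
        rw [Finset.mem_range] at hk
        rw [if_neg]
        rintro ⟨-, hk1, -⟩
        exact hne (by omega)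
      · intro hnotmem
        exact absurd (Finset.mem_range.mpr (by omega)) hnotmem
    · rw [if_pos hδ, Finset.sum_eq_zero, Nat.choose_eq_zero_of_lt (by omega)]
      · simp
      · intro k hk
        rw [Finset.mem_range] at hk
        rw [if_neg]
        rintro ⟨-, hk1, -⟩
        omega
  · rw [if_neg hδ]
    apply Finset.sum_eq_zero
    intro k _
    rw [if_neg]
    rintro ⟨h1, -, -⟩
    exact hδ h1

/-! ### A full term -/

lemma coeff_term (r i : ℕ) (m n : ℕ → ℕ) (hi1 : 1 ≤ i) (hir : i + 1 ≤ r)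
    (hm : ∀ j ∈ Finset.Icc 1 r, 1 ≤ m j) (hn : ∀ j ∈ Finset.Icc 1 r, 1 ≤ n j)
    (hsum : ∑ j ∈ Finset.Icc 1 r, n j = ∑ j ∈ Finset.Icc 1 r, m j) :
    MvPolynomial.coeff (∑ j ∈ Finset.Icc 1 r, Finsupp.single j (n j - 1))
      ((X (i + 1) - X i) ^ (m 1 - 1) *
        ((∏ j ∈ Finset.Icc 1 i, (X j : MvPolynomial ℕ ℚ) ^ (m (j + 1) - 1)) *
            (∏ j ∈ Finset.Icc (i + 2) r, (X j) ^ (m j - 1)) -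
          (∏ j ∈ Finset.Icc 1 (i - 1), (X j) ^ (m (j + 1) - 1)) *
            (∏ j ∈ Finset.Icc (i + 1) r, (X j) ^ (m j - 1)))) =
      if deltaCond r i m n then bb (n i) (n (i + 1)) (m 1) else 0 := by
  rw [mul_sub, coeff_sub, coeff_A r i m n hi1 hir hm hn hsum, coeff_B r i m n hi1 hir hm hn hsum]
  by_cases hδ : deltaCond r i m n
  · rw [if_pos hδ, if_pos hδ, if_pos hδ]
    unfold bb
    rw [neg_one_zpow_sub]
    have h1 : ((-1:ℚ))^(n i + 1) = -(-1:ℚ)^(n i) := by rw [pow_succ]; ring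
    rw [h1]
    ring
  · rw [if_neg hδ, if_neg hδ, if_neg hδ, sub_zero]

/-- Lemma 3.1: the coefficient of `x1^{n1-1} ⋯ xr^{nr-1}` in
`x1^{m1-1} ∘ (x1^{m2-1} ⋯ x_{r-1}^{m_r-1})` equals `e(m1,...,mr; n1,...,nr)`. -/
theorem ihara_coeff_eq_eE (r : ℕ) (hr : 1 ≤ r) (m : ℕ → ℕ)
    (hm : ∀ j ∈ Finset.Icc 1 r, 1 ≤ m j) (n : ℕ → ℕ)
    (hn : ∀ j ∈ Finset.Icc 1 r, 1 ≤ n j)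
    (hsum : ∑ j ∈ Finset.Icc 1 r, n j = ∑ j ∈ Finset.Icc 1 r, m j) :
    MvPolynomial.coeff (∑ j ∈ Finset.Icc 1 r, Finsupp.single j (n j - 1)) (iharaLHS r m) =
      eE r m n := by
  unfold iharaLHS eE
  rw [coeff_add, coeff_sum]
  congr 1
  · rw [prodXpow, coeff_monomial]
    have hiff : ((∑ j ∈ Finset.Icc 1 r, Finsupp.single j (m j - 1)) =
        ∑ j ∈ Finset.Icc 1 r, Finsupp.single j (n j - 1)) ↔
        ∀ j ∈ Finset.Icc 1 r, m j = n j := by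
      rw [DFunLike.ext_iff]
      constructor
      · intro h j hj
        have h' := h j
        simp only [sumsingle_apply] at h'
        rw [if_pos hj, if_pos hj] at h'
        have := hm j hj
        have := hn j hj
        omega
      · intro h j
        simp only [sumsingle_apply]
        split_ifs with hj
        · rw [h j hj]
        · rfl
    exact @if_congr ℚ _ _ _ (Classical.propDecidable _) _ _ _ _ hiff rfl rfl
  · apply Finset.sum_congr rfl
    intro i hi
    rw [Finset.mem_Icc] at hi
    exact coeff_term r i m n hi.1 (by omega) hm hn hsum
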